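/- Lemma 3 equality case: Under the hypotheses of Lemma 3 (|Ψ⟩ a unit vector in H_A ⊗ H_B, unit vectors |φ^A⟩, |φ̄^A⟩ ∈ H_A and |φ^B⟩, |φ̄^B⟩ ∈ H_B with ⟨Ψ|φ^A φ̄^B⟩ = ⟨Ψ|φ̄^A φ^B⟩ = 0, and assuming |φ^A⟩ ≠ |φ̄^A⟩ up to phase and |φ^B⟩ ≠ |φ̄^B⟩ up to phase and ⟨Ψ|φ^A φ^B⟩ ≠ 0), if |⟨Ψ|φ^A φ^B⟩|² + |⟨Ψ|φ̄^A φ̄^B⟩|² = 1 then ⟨φ^A|φ̄^A⟩ = 0 and ⟨φ^B|φ̄^B⟩ = 0, and |Ψ⟩ lies in the span of {|φ^A φ^B⟩, |φ^A φ̄^B⟩, |φ̄^A φ^B⟩, |φ̄^A φ̄^B⟩}. -/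

import Mathlib

open Matrix BigOperators
open scoped Kronecker ComplexOrder

noncomputable section

/-- A positive operator on a bipartite space is separable if it is a finite sum of
tensor (Kronecker) products of positive semidefinite local operators. -/
def IsSepOp {m n : Type*} [Fintype m] [Fintype n]
    (σ : Matrix (m × n) (m × n) ℂ) : Prop :=
  ∃ (k : ℕ) (f : Fin k → Matrix m m ℂ) (g : Fin k → Matrix n n ℂ),
    (∀ i, (f i).PosSemidef) ∧ (∀ i, (g i).PosSemidef) ∧ σ = ∑ i, f i ⊗ₖ g i

variable {A0 A B B0 : Type*} [Fintype A0] [Fintype A] [Fintype B] [Fintype B0]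
  [DecidableEq A0] [DecidableEq A] [DecidableEq B] [DecidableEq B0]

/-- `I^{A0} ⊗ ρ^{AB} ⊗ I^{B0}` as an operator on `H_{A0} ⊗ H_A ⊗ H_B ⊗ H_{B0}`. -/
def midEmbed (ρ : Matrix (A × B) (A × B) ℂ) :
    Matrix ((A0 × A) × (B × B0)) ((A0 × A) × (B × B0)) ℂ :=
  Matrix.of fun p q =>
    (if p.1.1 = q.1.1 then 1 else 0) * ρ (p.1.2, p.2.1) (q.1.2, q.2.1) *
      (if p.2.2 = q.2.2 then 1 else 0)

/-- Partial trace over the middle factors `H_A ⊗ H_B`. -/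
def ptraceMid (M : Matrix ((A0 × A) × (B × B0)) ((A0 × A) × (B × B0)) ℂ) :
    Matrix (A0 × B0) (A0 × B0) ℂ :=
  Matrix.of fun p q => ∑ a : A, ∑ b : B, M ((p.1, a), (b, p.2)) ((q.1, a), (b, q.2))

/-- Effective operator `Tr_{AB}[(I ⊗ ρ^{AB} ⊗ I)(M^{A0A} ⊗ M^{BB0})]`. -/
def effOp (ρ : Matrix (A × B) (A × B) ℂ)
    (M1 : Matrix (A0 × A) (A0 × A) ℂ) (M2 : Matrix (B × B0) (B × B0) ℂ) :
    Matrix (A0 × B0) (A0 × B0) ℂ :=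
  ptraceMid (midEmbed ρ * (M1 ⊗ₖ M2))

/-- Tensor product of vectors. -/
def tens {m n : Type*} (u : m → ℂ) (v : n → ℂ) : m × n → ℂ := fun p => u p.1 * v p.2

/-- Rank-one projector `|v⟩⟨v|` associated to a vector. -/
def vecProj {m : Type*} (v : m → ℂ) : Matrix m m ℂ := Matrix.of fun p q => v p * star (v q)

set_option maxHeartbeats 1000000
section Stmt8aux

lemma realaux {x yv t u sa sb bb cc : ℝ} (hx : 0 < x) (ht : 0 ≤ t) (hu : 0 ≤ u)
    (hyv : 0 ≤ yv)
    (hsa : 0 < sa) (hsb : 0 < sb) (hsa2 : sa^2 = 1 - t^2) (hsb2 : sb^2 = 1 - u^2)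
    (hbbe : sb * bb = u * x) (hcce : sa * cc = t * x)
    (hbessel : x^2 + bb^2 + cc^2 + yv^2 ≤ 1)
    (hkey : 1 ≤ x^2 + (sa*sb*yv + t*u*x)^2) :
    t = 0 ∧ u = 0 := by
  set Q := sa * sb with hQ
  have hQ0 : 0 ≤ Q := by positivity
  have hQ2 : Q^2 = (1-t^2)*(1-u^2) := by rw [hQ, mul_pow, hsa2, hsb2]
  have ht1 : t^2 < 1 := by nlinarith [sq_nonneg sa]
  have hu1 : u^2 < 1 := by nlinarith [sq_nonneg sb]
  have hQ1 : Q ≤ 1 := by nlinarith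
  have h5 : bb^2 + cc^2 + yv^2 ≤ (Q*yv + t*u*x)^2 := by linarith
  have h6 : (bb^2 + cc^2 + yv^2) * Q^2 ≤ (Q*yv + t*u*x)^2 * Q^2 :=
    mul_le_mul_of_nonneg_right h5 (sq_nonneg Q)
  have hL : (bb^2 + cc^2 + yv^2) * Q^2 = u^2*x^2*(1-t^2) + t^2*x^2*(1-u^2) + yv^2*Q^2 := by
    have e : (bb^2 + cc^2 + yv^2) * Q^2 = (sb*bb)^2*sa^2 + (sa*cc)^2*sb^2 + yv^2*Q^2 := by
      rw [hQ]; ring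
    rw [e, hbbe, hcce, hsa2, hsb2]; ring
  have hineq4 : u^2*x^2*(1-t^2) + t^2*x^2*(1-u^2) + yv^2*Q^2 ≤ (Q*yv + t*u*x)^2 * Q^2 := by
    rw [← hL]; exact h6
  have hbr : 0 ≤ (x^2+yv^2)*(t^2+u^2-t^2*u^2) - 2*Q*t*u*x*yv := by
    have h1 : Q*t*u ≤ t*u := by nlinarith [mul_nonneg ht hu]
    have h2 : t*u ≤ t^2 + u^2 - t^2*u^2 := by nlinarith [sq_nonneg (t-u), mul_nonneg ht hu]
    have h3 : 2*(x*yv) ≤ x^2 + yv^2 := by nlinarith [sq_nonneg (x - yv)]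
    have h4 : 0 ≤ Q*t*u := by positivity
    have h5' : 0 ≤ x*yv := by positivity
    calc (0:ℝ) = 2*(Q*t*u)*(x*yv) - 2*(Q*t*u)*(x*yv) := by ring
      _ ≤ (x^2+yv^2)*(t^2+u^2-t^2*u^2) - 2*Q*t*u*x*yv := by
          have := mul_le_mul (h1.trans h2) h3 (by positivity) (by nlinarith)
          nlinarith [this]
  have hbrQ : 0 ≤ Q^2 * ((x^2+yv^2)*(t^2+u^2-t^2*u^2) - 2*Q*t*u*x*yv) :=
    mul_nonneg (sq_nonneg Q) hbr
  have hident : u^2*x^2*(1-t^2) + t^2*x^2*(1-u^2) + yv^2*Q^2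
      - (Q*yv+t*u*x)^2*Q^2 - t^4*x^2*(1-u^2) - u^4*x^2*(1-t^2)
      - Q^2*((x^2+yv^2)*(t^2+u^2-t^2*u^2) - 2*Q*t*u*x*yv) = 0 := by
    linear_combination (yv^2 - yv^2*(Q^2+(1-t^2)*(1-u^2)) - t^2*u^2*x^2
      - (x^2+yv^2)*(t^2+u^2-t^2*u^2)) * hQ2
  have hfinal : t^4*x^2*(1-u^2) + u^4*x^2*(1-t^2) ≤ 0 := by linarith
  have htnn : 0 ≤ t^4*x^2*(1-u^2) :=
    mul_nonneg (mul_nonneg (pow_nonneg ht 4) (sq_nonneg x)) (by linarith)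
  have hunn : 0 ≤ u^4*x^2*(1-t^2) :=
    mul_nonneg (mul_nonneg (pow_nonneg hu 4) (sq_nonneg x)) (by linarith)
  have ht0 : t^4*x^2*(1-u^2) = 0 := le_antisymm (by linarith) htnn
  have hu0 : u^4*x^2*(1-t^2) = 0 := le_antisymm (by linarith) hunn
  constructor
  · have : t^4 = 0 := by
      rcases mul_eq_zero.mp ht0 with h | h
      · rcases mul_eq_zero.mp h with h' | h'
        · exact h'
        · exact absurd h' (pow_ne_zero 2 (ne_of_gt hx))
      · linarith
    exact pow_eq_zero_iff (by norm_num) |>.mp this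
  · have : u^4 = 0 := by
      rcases mul_eq_zero.mp hu0 with h | h
      · rcases mul_eq_zero.mp h with h' | h'
        · exact h'
        · exact absurd h' (pow_ne_zero 2 (ne_of_gt hx))
      · linarith
    exact pow_eq_zero_iff (by norm_num) |>.mp this

variable {ι κ : Type*} [Fintype ι] [Fintype κ]

lemma dstar (x y : ι → ℂ) : star (star x ⬝ᵥ y) = star y ⬝ᵥ x := by
  simp only [dotProduct, star_sum, star_mul', star_star, Pi.star_apply]
  exact Finset.sum_congr rfl fun i _ => mul_comm _ _

lemma star_mul_self_eq (z : ℂ) : star z * z = ((‖z‖^2 : ℝ) : ℂ) := by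
  rw [Complex.star_def, mul_comm, Complex.mul_conj, Complex.normSq_eq_norm_sq]

lemma tens_dot (u w : ι → ℂ) (v z : κ → ℂ) :
    star (tens u v) ⬝ᵥ tens w z = (star u ⬝ᵥ w) * (star v ⬝ᵥ z) := by
  simp only [dotProduct, Pi.star_apply, tens, star_mul', Fintype.sum_prod_type,
    Finset.sum_mul_sum]
  exact Finset.sum_congr rfl fun i _ => Finset.sum_congr rfl fun j _ => by ring

omit [Fintype ι] [Fintype κ] in
lemma tens_add_right (u : ι → ℂ) (v w : κ → ℂ) : tens u (v + w) = tens u v + tens u w := by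
  funext p; simp [tens]; ring

omit [Fintype ι] [Fintype κ] in
lemma tens_smul_right (u : ι → ℂ) (c : ℂ) (v : κ → ℂ) : tens u (c • v) = c • tens u v := by
  funext p; simp [tens]; ring

omit [Fintype ι] [Fintype κ] in
lemma tens_add_left (u v : ι → ℂ) (w : κ → ℂ) : tens (u + v) w = tens u w + tens v w := by
  funext p; simp [tens]; ring

omit [Fintype ι] [Fintype κ] in
lemma tens_smul_left (c : ℂ) (u : ι → ℂ) (w : κ → ℂ) : tens (c • u) w = c • tens u w := by
  funext p; simp [tens]; ring

lemma onb_aux {u u' : ι → ℂ} (hu : star u ⬝ᵥ u = 1) (hu' : star u' ⬝ᵥ u' = 1)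
    (hA : ¬ ∃ c : ℂ, ‖c‖ = 1 ∧ u' = c • u) :
    ∃ (χ : ι → ℂ) (s : ℝ), 0 < s ∧ s^2 = 1 - ‖star u ⬝ᵥ u'‖^2 ∧
      star u ⬝ᵥ χ = 0 ∧ star χ ⬝ᵥ u = 0 ∧ star χ ⬝ᵥ χ = 1 ∧
      u' = (star u ⬝ᵥ u') • u + (s:ℂ) • χ := by
  set a := star u ⬝ᵥ u' with ha
  have hsymm : star u' ⬝ᵥ u = star a := by rw [ha, dstar]
  set w := u' - a • u with hw
  have hww : star w ⬝ᵥ w = ((1 - ‖a‖^2 : ℝ) : ℂ) := by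
    have : star w ⬝ᵥ w = 1 - star a * a := by
      rw [hw]
      simp only [star_sub, star_smul, sub_dotProduct, dotProduct_sub, smul_dotProduct,
        dotProduct_smul, smul_eq_mul, hu, hu', hsymm, ← ha]
      ring
    rw [this, star_mul_self_eq]
    push_cast; ring
  have huw : star u ⬝ᵥ w = 0 := by
    rw [hw]
    simp only [dotProduct_sub, dotProduct_smul, smul_eq_mul, hu, ← ha]
    ring
  have hwu : star w ⬝ᵥ u = 0 := by
    rw [hw]
    simp only [star_sub, star_smul, sub_dotProduct, smul_dotProduct, smul_eq_mul, hu, hsymm]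
    ring
  have hle : ‖a‖^2 ≤ 1 := by
    have h0 := dotProduct_star_self_nonneg w
    rw [hww] at h0
    have := Complex.zero_le_real.mp h0
    linarith
  have hlt : ‖a‖^2 < 1 := by
    rcases lt_or_eq_of_le hle with h | h
    · exact h
    · exfalso
      have hw0 : w = 0 := by
        apply dotProduct_star_self_eq_zero.mp
        rw [hww, h]; push_cast; ring
      have : u' = a • u := sub_eq_zero.mp (hw ▸ hw0 : u' - a • u = 0)
      exact hA ⟨a, by
        constructor
        · have : ‖a‖^2 = 1 := h
          nlinarith [norm_nonneg a]
        · exact this⟩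
  set s := Real.sqrt (1 - ‖a‖^2) with hs
  have hspos : 0 < s := Real.sqrt_pos.mpr (by linarith)
  have hs2 : s^2 = 1 - ‖a‖^2 := Real.sq_sqrt (by linarith)
  have hsne : (s:ℂ) ≠ 0 := by exact_mod_cast ne_of_gt hspos
  refine ⟨(s:ℂ)⁻¹ • w, s, hspos, hs2, ?_, ?_, ?_, ?_⟩
  · rw [dotProduct_smul, huw, smul_zero]
  · rw [star_smul, smul_dotProduct, hwu, smul_zero]
  · rw [star_smul, smul_dotProduct, dotProduct_smul, hww]
    rw [star_inv₀, Complex.star_def, Complex.conj_ofReal]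
    rw [smul_eq_mul, smul_eq_mul, ← hs2]
    push_cast
    field_simp
  · rw [smul_smul, mul_inv_cancel₀ hsne, one_smul, hw]
    abel

lemma bessel4 {Ψ g1 g2 g3 g4 : ι → ℂ} (hΨ : star Ψ ⬝ᵥ Ψ = 1)
    (h11 : star g1 ⬝ᵥ g1 = 1) (h22 : star g2 ⬝ᵥ g2 = 1)
    (h33 : star g3 ⬝ᵥ g3 = 1) (h44 : star g4 ⬝ᵥ g4 = 1)
    (h12 : star g1 ⬝ᵥ g2 = 0) (h13 : star g1 ⬝ᵥ g3 = 0) (h14 : star g1 ⬝ᵥ g4 = 0)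
    (h21 : star g2 ⬝ᵥ g1 = 0) (h23 : star g2 ⬝ᵥ g3 = 0) (h24 : star g2 ⬝ᵥ g4 = 0)
    (h31 : star g3 ⬝ᵥ g1 = 0) (h32 : star g3 ⬝ᵥ g2 = 0) (h34 : star g3 ⬝ᵥ g4 = 0)
    (h41 : star g4 ⬝ᵥ g1 = 0) (h42 : star g4 ⬝ᵥ g2 = 0) (h43 : star g4 ⬝ᵥ g3 = 0) :
    (‖star Ψ ⬝ᵥ g1‖^2 + ‖star Ψ ⬝ᵥ g2‖^2 + ‖star Ψ ⬝ᵥ g3‖^2 + ‖star Ψ ⬝ᵥ g4‖^2 ≤ 1) ∧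
    (‖star Ψ ⬝ᵥ g1‖^2 + ‖star Ψ ⬝ᵥ g2‖^2 + ‖star Ψ ⬝ᵥ g3‖^2 + ‖star Ψ ⬝ᵥ g4‖^2 = 1 →
      Ψ = star (star Ψ ⬝ᵥ g1) • g1 + star (star Ψ ⬝ᵥ g2) • g2 +
          star (star Ψ ⬝ᵥ g3) • g3 + star (star Ψ ⬝ᵥ g4) • g4) := by
  set y : ι → ℂ := star (star Ψ ⬝ᵥ g1) • g1 + star (star Ψ ⬝ᵥ g2) • g2 +
      star (star Ψ ⬝ᵥ g3) • g3 + star (star Ψ ⬝ᵥ g4) • g4 with hy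
  have hg1 : star g1 ⬝ᵥ Ψ = star (star Ψ ⬝ᵥ g1) := (dstar Ψ g1).symm
  have hg2 : star g2 ⬝ᵥ Ψ = star (star Ψ ⬝ᵥ g2) := (dstar Ψ g2).symm
  have hg3 : star g3 ⬝ᵥ Ψ = star (star Ψ ⬝ᵥ g3) := (dstar Ψ g3).symm
  have hg4 : star g4 ⬝ᵥ Ψ = star (star Ψ ⬝ᵥ g4) := (dstar Ψ g4).symm
  have hrr : star (Ψ - y) ⬝ᵥ (Ψ - y) =
      1 - ((‖star Ψ ⬝ᵥ g1‖^2 + ‖star Ψ ⬝ᵥ g2‖^2 + ‖star Ψ ⬝ᵥ g3‖^2 + ‖star Ψ ⬝ᵥ g4‖^2 : ℝ) : ℂ) := by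
    have hS : ((‖star Ψ ⬝ᵥ g1‖^2 + ‖star Ψ ⬝ᵥ g2‖^2 + ‖star Ψ ⬝ᵥ g3‖^2 + ‖star Ψ ⬝ᵥ g4‖^2 : ℝ) : ℂ)
        = star (star Ψ ⬝ᵥ g1) * (star Ψ ⬝ᵥ g1) + star (star Ψ ⬝ᵥ g2) * (star Ψ ⬝ᵥ g2)
          + star (star Ψ ⬝ᵥ g3) * (star Ψ ⬝ᵥ g3) + star (star Ψ ⬝ᵥ g4) * (star Ψ ⬝ᵥ g4) := by
      rw [star_mul_self_eq, star_mul_self_eq, star_mul_self_eq, star_mul_self_eq]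
      push_cast; ring
    rw [hS, hy]
    simp only [star_sub, star_add, star_smul, star_star, sub_dotProduct, dotProduct_sub,
      add_dotProduct, dotProduct_add, smul_dotProduct, dotProduct_smul, smul_eq_mul,
      hΨ, h11, h22, h33, h44, h12, h13, h14, h21, h23, h24, h31, h32, h34, h41, h42, h43,
      hg1, hg2, hg3, hg4]
    ring
  constructor
  · have h0 := dotProduct_star_self_nonneg (Ψ - y)
    rw [hrr] at h0
    have h1 : (0:ℂ) ≤ ((1 - (‖star Ψ ⬝ᵥ g1‖^2 + ‖star Ψ ⬝ᵥ g2‖^2 + ‖star Ψ ⬝ᵥ g3‖^2 + ‖star Ψ ⬝ᵥ g4‖^2) : ℝ) : ℂ) := by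
      convert h0 using 1; push_cast; ring
    have := Complex.zero_le_real.mp h1
    linarith
  · intro h
    have h0 : star (Ψ - y) ⬝ᵥ (Ψ - y) = 0 := by rw [hrr, h]; push_cast; ring
    have := dotProduct_star_self_eq_zero.mp h0
    have := sub_eq_zero.mp this
    rw [this, hy]

end Stmt8aux

/-- Lemma 3, equality case. -/
theorem stmt8 {ιA ιB : Type*} [Fintype ιA] [Fintype ιB]
    (Ψ : ιA × ιB → ℂ) (hΨ : star Ψ ⬝ᵥ Ψ = 1)
    (φA φA' : ιA → ℂ) (φB φB' : ιB → ℂ)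
    (hφA : star φA ⬝ᵥ φA = 1) (hφA' : star φA' ⬝ᵥ φA' = 1)
    (hφB : star φB ⬝ᵥ φB = 1) (hφB' : star φB' ⬝ᵥ φB' = 1)
    (h1 : star Ψ ⬝ᵥ tens φA φB' = 0) (h2 : star Ψ ⬝ᵥ tens φA' φB = 0)
    (hA : ¬ ∃ c : ℂ, ‖c‖ = 1 ∧ φA' = c • φA)
    (hB : ¬ ∃ c : ℂ, ‖c‖ = 1 ∧ φB' = c • φB)
    (hne : star Ψ ⬝ᵥ tens φA φB ≠ 0)
    (heq : ‖star Ψ ⬝ᵥ tens φA φB‖ ^ 2 + ‖star Ψ ⬝ᵥ tens φA' φB'‖ ^ 2 = 1) :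
    star φA ⬝ᵥ φA' = 0 ∧ star φB ⬝ᵥ φB' = 0 ∧
      Ψ ∈ Submodule.span ℂ
        ({tens φA φB, tens φA φB', tens φA' φB, tens φA' φB'} : Set (ιA × ιB → ℂ)) := by
  obtain ⟨χA, sa, hsa, hsa2, hAχ, hχA, hχχA, hdecA⟩ := onb_aux hφA hφA' hA
  obtain ⟨χB, sb, hsb, hsb2, hBχ, hχB, hχχB, hdecB⟩ := onb_aux hφB hφB' hB
  -- relations among the coefficients
  have h1' : (star φB ⬝ᵥ φB') * (star Ψ ⬝ᵥ tens φA φB)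
      + (sb:ℂ) * (star Ψ ⬝ᵥ tens φA χB) = 0 := by
    rw [← h1]
    conv_rhs => rw [hdecB]
    rw [tens_add_right, tens_smul_right, tens_smul_right, dotProduct_add,
      dotProduct_smul, dotProduct_smul, smul_eq_mul, smul_eq_mul]
  have h2' : (star φA ⬝ᵥ φA') * (star Ψ ⬝ᵥ tens φA φB)
      + (sa:ℂ) * (star Ψ ⬝ᵥ tens χA φB) = 0 := by
    rw [← h2]
    conv_rhs => rw [hdecA]
    rw [tens_add_left, tens_smul_left, tens_smul_left, dotProduct_add,
      dotProduct_smul, dotProduct_smul, smul_eq_mul, smul_eq_mul]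
  have hd : star Ψ ⬝ᵥ tens φA' φB' = (sa:ℂ) * (sb:ℂ) * (star Ψ ⬝ᵥ tens χA χB)
      - (star φA ⬝ᵥ φA') * (star φB ⬝ᵥ φB') * (star Ψ ⬝ᵥ tens φA φB) := by
    conv_lhs => rw [hdecA, hdecB]
    simp only [tens_add_left, tens_smul_left, tens_add_right, tens_smul_right,
      smul_add, smul_smul, dotProduct_add, dotProduct_smul, smul_eq_mul]
    linear_combination (star φA ⬝ᵥ φA') * h1' + (star φB ⬝ᵥ φB') * h2'
  -- Bessel inequality for the orthonormal system
  obtain ⟨hble, hbeq⟩ := bessel4 (g1 := tens φA φB) (g2 := tens φA χB)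
      (g3 := tens χA φB) (g4 := tens χA χB) hΨ
    (by simp [tens_dot, hφA, hφB, hχχA, hχχB, hAχ, hχA, hBχ, hχB]) (by simp [tens_dot, hφA, hφB, hχχA, hχχB, hAχ, hχA, hBχ, hχB])
    (by simp [tens_dot, hφA, hφB, hχχA, hχχB, hAχ, hχA, hBχ, hχB]) (by simp [tens_dot, hφA, hφB, hχχA, hχχB, hAχ, hχA, hBχ, hχB])
    (by simp [tens_dot, hφA, hφB, hχχA, hχχB, hAχ, hχA, hBχ, hχB]) (by simp [tens_dot, hφA, hφB, hχχA, hχχB, hAχ, hχA, hBχ, hχB])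
    (by simp [tens_dot, hφA, hφB, hχχA, hχχB, hAχ, hχA, hBχ, hχB]) (by simp [tens_dot, hφA, hφB, hχχA, hχχB, hAχ, hχA, hBχ, hχB])
    (by simp [tens_dot, hφA, hφB, hχχA, hχχB, hAχ, hχA, hBχ, hχB]) (by simp [tens_dot, hφA, hφB, hχχA, hχχB, hAχ, hχA, hBχ, hχB])
    (by simp [tens_dot, hφA, hφB, hχχA, hχχB, hAχ, hχA, hBχ, hχB]) (by simp [tens_dot, hφA, hφB, hχχA, hχχB, hAχ, hχA, hBχ, hχB])
    (by simp [tens_dot, hφA, hφB, hχχA, hχχB, hAχ, hχA, hBχ, hχB]) (by simp [tens_dot, hφA, hφB, hχχA, hχχB, hAχ, hχA, hBχ, hχB])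
    (by simp [tens_dot, hφA, hφB, hχχA, hχχB, hAχ, hχA, hBχ, hχB]) (by simp [tens_dot, hφA, hφB, hχχA, hχχB, hAχ, hχA, hBχ, hχB])
  -- norms
  have hx : 0 < ‖star Ψ ⬝ᵥ tens φA φB‖ := norm_pos_iff.mpr hne
  have hbbe : sb * ‖star Ψ ⬝ᵥ tens φA χB‖
      = ‖star φB ⬝ᵥ φB'‖ * ‖star Ψ ⬝ᵥ tens φA φB‖ := by
    have e1 : (sb:ℂ) * (star Ψ ⬝ᵥ tens φA χB)
        = -((star φB ⬝ᵥ φB') * (star Ψ ⬝ᵥ tens φA φB)) := by linear_combination h1'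
    have := congrArg norm e1
    rwa [norm_mul, norm_neg, norm_mul, Complex.norm_real, Real.norm_eq_abs,
      abs_of_pos hsb] at this
  have hcce : sa * ‖star Ψ ⬝ᵥ tens χA φB‖
      = ‖star φA ⬝ᵥ φA'‖ * ‖star Ψ ⬝ᵥ tens φA φB‖ := by
    have e1 : (sa:ℂ) * (star Ψ ⬝ᵥ tens χA φB)
        = -((star φA ⬝ᵥ φA') * (star Ψ ⬝ᵥ tens φA φB)) := by linear_combination h2'
    have := congrArg norm e1
    rwa [norm_mul, norm_neg, norm_mul, Complex.norm_real, Real.norm_eq_abs,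
      abs_of_pos hsa] at this
  have hkey : 1 ≤ ‖star Ψ ⬝ᵥ tens φA φB‖^2 + (sa*sb*‖star Ψ ⬝ᵥ tens χA χB‖
      + ‖star φA ⬝ᵥ φA'‖*‖star φB ⬝ᵥ φB'‖*‖star Ψ ⬝ᵥ tens φA φB‖)^2 := by
    have hub : ‖star Ψ ⬝ᵥ tens φA' φB'‖ ≤ sa*sb*‖star Ψ ⬝ᵥ tens χA χB‖
        + ‖star φA ⬝ᵥ φA'‖*‖star φB ⬝ᵥ φB'‖*‖star Ψ ⬝ᵥ tens φA φB‖ := by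
      rw [hd]
      refine (norm_sub_le _ _).trans ?_
      rw [norm_mul, norm_mul, norm_mul, norm_mul, Complex.norm_real, Complex.norm_real,
        Real.norm_eq_abs, Real.norm_eq_abs, abs_of_pos hsa, abs_of_pos hsb]
    have h2 : ‖star Ψ ⬝ᵥ tens φA' φB'‖^2 ≤ (sa*sb*‖star Ψ ⬝ᵥ tens χA χB‖
        + ‖star φA ⬝ᵥ φA'‖*‖star φB ⬝ᵥ φB'‖*‖star Ψ ⬝ᵥ tens φA φB‖)^2 :=
      pow_le_pow_left₀ (norm_nonneg _) hub 2
    linarith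
  have hsa2' : sa^2 = 1 - ‖star φA ⬝ᵥ φA'‖^2 := hsa2
  have hsb2' : sb^2 = 1 - ‖star φB ⬝ᵥ φB'‖^2 := hsb2
  obtain ⟨ht0, hu0⟩ := realaux hx (norm_nonneg _) (norm_nonneg _) (norm_nonneg _)
    hsa hsb hsa2' hsb2' hbbe hcce (by linarith) hkey
  have ha0 : star φA ⬝ᵥ φA' = 0 := norm_eq_zero.mp ht0
  have hb0 : star φB ⬝ᵥ φB' = 0 := norm_eq_zero.mp hu0
  refine ⟨ha0, hb0, ?_⟩
  -- equality case: sa = sb = 1, χ's are the primed vectors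
  have hsa1 : sa = 1 := by
    rw [ht0] at hsa2'; nlinarith
  have hsb1 : sb = 1 := by
    rw [hu0] at hsb2'; nlinarith
  have hχAeq : χA = φA' := by
    rw [hdecA, ha0, hsa1]
    simp
  have hχBeq : χB = φB' := by
    rw [hdecB, hb0, hsb1]
    simp
  have hbb0 : star Ψ ⬝ᵥ tens φA χB = 0 := by
    have := h1'
    rw [hb0, hsb1] at this
    simpa using this
  have hcc0 : star Ψ ⬝ᵥ tens χA φB = 0 := by
    have := h2'
    rw [ha0, hsa1] at this
    simpa using this
  have hd4 : star Ψ ⬝ᵥ tens χA χB = star Ψ ⬝ᵥ tens φA' φB' := by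
    rw [hd, ha0, hsa1, hsb1]
    push_cast; ring
  have hsum : ‖star Ψ ⬝ᵥ tens φA φB‖^2 + ‖star Ψ ⬝ᵥ tens φA χB‖^2
      + ‖star Ψ ⬝ᵥ tens χA φB‖^2 + ‖star Ψ ⬝ᵥ tens χA χB‖^2 = 1 := by
    rw [hbb0, hcc0, hd4]
    simpa using heq
  have hΨeq := hbeq hsum
  rw [hχAeq, hχBeq] at hΨeq
  rw [hΨeq]
  have m1 : tens φA φB ∈ ({tens φA φB, tens φA φB', tens φA' φB, tens φA' φB'} : Set (ιA × ιB → ℂ)) := by simp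
  have m2 : tens φA φB' ∈ ({tens φA φB, tens φA φB', tens φA' φB, tens φA' φB'} : Set (ιA × ιB → ℂ)) := by simp
  have m3 : tens φA' φB ∈ ({tens φA φB, tens φA φB', tens φA' φB, tens φA' φB'} : Set (ιA × ιB → ℂ)) := by simp
  have m4 : tens φA' φB' ∈ ({tens φA φB, tens φA φB', tens φA' φB, tens φA' φB'} : Set (ιA × ιB → ℂ)) := by simp
  exact Submodule.add_mem _ (Submodule.add_mem _ (Submodule.add_mem _
    (Submodule.smul_mem _ _ (Submodule.subset_span m1))
    (Submodule.smul_mem _ _ (Submodule.subset_span m2)))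
    (Submodule.smul_mem _ _ (Submodule.subset_span m3)))
    (Submodule.smul_mem _ _ (Submodule.subset_span m4))
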